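/- Let G₁ and G₂ be finite groups and p, q distinct primes. Then G₁ × G₂ contains a subgroup which is a Schmidt (p,q)-group if and only if G₁ contains such a subgroup or G₂ contains such a subgroup. (The Schmidt graph function is D₀-closed: Γ_Sch(G₁×G₂) = Γ_Sch(G₁) ∪ Γ_Sch(G₂).) -/
import Mathlib


/-- The join of a set of normal subgroups is normal. -/
theorem sSup_normal {G : Type*} [Group G] (S : Set (Subgroup G)) (hS : ∀ N ∈ S, N.Normal) :
    (sSup S).Normal := by
  constructor
  intro n hn g
  rw [sSup_eq_iSup'] at hn ⊢
  refine Subgroup.iSup_induction (C := fun x => g * x * g⁻¹ ∈ ⨆ N : S, (N : Subgroup G))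
    _ hn ?_ ?_ ?_
  · intro N x hx
    exact Subgroup.mem_iSup_of_mem N ((hS N N.2).conj_mem x hx g)
  · simpa using Subgroup.one_mem _
  · intro x y hx hy
    have h : g * (x * y) * g⁻¹ = (g * x * g⁻¹) * (g * y * g⁻¹) := by group
    rw [h]; exact Subgroup.mul_mem _ hx hy

/-- The `p'`-core `O_{p'}(G)`: the largest normal subgroup of `G` of order coprime to `p`,
realized as the join of all normal subgroups of order coprime to `p`. -/
def pPrimeCore (p : ℕ) (G : Type*) [Group G] : Subgroup G :=
  sSup {N : Subgroup G | N.Normal ∧ Nat.Coprime (Nat.card N) p}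

instance pPrimeCore_normal (p : ℕ) (G : Type*) [Group G] : (pPrimeCore p G).Normal :=
  sSup_normal _ fun _ hN => hN.1

/-- The `p`-core `O_p(G)`: the largest normal `p`-subgroup of `G`,
realized as the join of all normal `p`-subgroups. -/
def pCore (p : ℕ) (G : Type*) [Group G] : Subgroup G :=
  sSup {N : Subgroup G | N.Normal ∧ IsPGroup p N}

instance pCore_normal (p : ℕ) (G : Type*) [Group G] : (pCore p G).Normal :=
  sSup_normal _ fun _ hN => hN.1

/-- `O_{p',p}(G)`: the preimage in `G` of `O_p(G / O_{p'}(G))`. -/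
def OpPrimeP (p : ℕ) (G : Type*) [Group G] : Subgroup G :=
  (pCore p (G ⧸ pPrimeCore p G)).comap (QuotientGroup.mk' (pPrimeCore p G))

/-- A Schmidt group: a non-nilpotent group all of whose proper subgroups are nilpotent. -/
def IsSchmidt (G : Type*) [Group G] : Prop :=
  ¬ Group.IsNilpotent G ∧ ∀ H : Subgroup G, H ≠ ⊤ → Group.IsNilpotent H

/-- A Schmidt `(p,q)`-group: a Schmidt group whose order is divisible by exactly the
primes `p` and `q` and whose Sylow `p`-subgroup is normal. -/
def IsSchmidtPQ (p q : ℕ) (G : Type*) [Group G] : Prop :=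
  IsSchmidt G ∧ (Nat.card G).primeFactors = {p, q} ∧ ∃ P : Sylow p G, (P : Subgroup G).Normal


lemma isSchmidtPQ_of_mulEquiv {G G' : Type*} [Group G] [Group G'] [Finite G]
    {p q : ℕ} (hp : p.Prime) (e : G ≃* G') (h : IsSchmidtPQ p q G) : IsSchmidtPQ p q G' := by
  haveI : Fact p.Prime := ⟨hp⟩
  obtain ⟨⟨hnn, hsub⟩, hcard, P, hP⟩ := h
  have hes : Function.Surjective (e.toMonoidHom : G →* G') := e.surjective
  refine ⟨⟨fun hn => hnn ((Group.isNilpotent_congr e).mpr hn), fun H hH => ?_⟩, ?_, ?_⟩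
  · have hK : H.comap e.toMonoidHom ≠ ⊤ := fun ht =>
      hH (Subgroup.comap_injective hes (ht.trans (Subgroup.comap_top _).symm))
    haveI := hsub _ hK
    have hmap := Subgroup.map_comap_eq_self_of_surjective hes H
    rw [← hmap]
    exact nilpotent_of_surjective _ (e.toMonoidHom.subgroupMap_surjective _)
  · rw [← Nat.card_congr e.toEquiv]
    exact hcard
  · refine ⟨P.mapSurjective hes, ?_⟩
    have : ((P.mapSurjective hes : Sylow p G') : Subgroup G')
        = (P : Subgroup G).map e.toMonoidHom := Sylow.coe_mapSurjective _ _
    rw [this]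
    exact hP.map _ hes

lemma isSchmidtPQ_quotient {G : Type*} [Group G] [Finite G] {p q : ℕ}
    (hp : p.Prime) (hq : q.Prime) (h : IsSchmidtPQ p q G)
    (N : Subgroup G) [N.Normal] (hnn : ¬ Group.IsNilpotent (G ⧸ N)) :
    IsSchmidtPQ p q (G ⧸ N) := by
  haveI : Fact p.Prime := ⟨hp⟩
  haveI : Fact q.Prime := ⟨hq⟩
  obtain ⟨⟨_, hsub⟩, hcard, P, hP⟩ := h
  have hsurj : Function.Surjective (QuotientGroup.mk' N) := QuotientGroup.mk'_surjective N
  have hn0 : Nat.card (G ⧸ N) ≠ 0 := Nat.card_pos.ne'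
  have hdvd : Nat.card (G ⧸ N) ∣ Nat.card G :=
    Dvd.intro _ (Subgroup.card_eq_card_quotient_mul_card_subgroup N).symm
  have hss : (Nat.card (G ⧸ N)).primeFactors ⊆ ({p, q} : Finset ℕ) :=
    hcard ▸ Nat.primeFactors_mono hdvd Nat.card_pos.ne'
  refine ⟨⟨hnn, fun H hH => ?_⟩, ?_, ?_⟩
  · have hK : H.comap (QuotientGroup.mk' N) ≠ ⊤ := fun ht =>
      hH (Subgroup.comap_injective hsurj (ht.trans (Subgroup.comap_top _).symm))
    haveI := hsub _ hK
    have hmap := Subgroup.map_comap_eq_self_of_surjective hsurj H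
    rw [← hmap]
    exact nilpotent_of_surjective _ ((QuotientGroup.mk' N).subgroupMap_surjective _)
  · have key : ∀ r s : ℕ, r.Prime → s.Prime →
        r ∉ (Nat.card (G ⧸ N)).primeFactors →
        ((Nat.card (G ⧸ N)).primeFactors ⊆ ({r, s} : Finset ℕ)) →
        IsPGroup s (G ⧸ N) := by
      intro r s hr hs hrn hsub'
      have huniq : ∀ {d : ℕ}, d.Prime → d ∣ Nat.card (G ⧸ N) → d = s := by
        intro d hd hdd
        have hdm : d ∈ (Nat.card (G ⧸ N)).primeFactors :=
          Nat.mem_primeFactors.mpr ⟨hd, hdd, hn0⟩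
        have := hsub' hdm
        simp only [Finset.mem_insert, Finset.mem_singleton] at this
        rcases this with rfl | rfl
        · exact absurd hdm hrn
        · rfl
      haveI : Fact s.Prime := ⟨hs⟩
      exact IsPGroup.iff_card.mpr ⟨_, Nat.eq_prime_pow_of_unique_prime_dvd hn0 huniq⟩
    have hmemp : p ∈ (Nat.card (G ⧸ N)).primeFactors := by
      by_contra hp'
      exact hnn (key p q hp hq hp' hss).isNilpotent
    have hmemq : q ∈ (Nat.card (G ⧸ N)).primeFactors := by
      by_contra hq'
      refine hnn (key q p hq hp hq' ?_).isNilpotent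
      intro x hx
      have := hss hx
      simp only [Finset.mem_insert, Finset.mem_singleton] at this ⊢
      tauto
    exact Finset.Subset.antisymm hss
      (Finset.insert_subset_iff.mpr ⟨hmemp, Finset.singleton_subset_iff.mpr hmemq⟩)
  · refine ⟨P.mapSurjective hsurj, ?_⟩
    have : ((P.mapSurjective hsurj : Sylow p (G ⧸ N)) : Subgroup (G ⧸ N))
        = (P : Subgroup G).map (QuotientGroup.mk' N) := Sylow.coe_mapSurjective _ _
    rw [this]
    exact hP.map _ hsurj

/-- The Schmidt graph function is `D₀`-closed: `G₁ × G₂` contains a Schmidt `(p,q)`-subgroup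
iff `G₁` does or `G₂` does. -/
theorem schmidt_D0_closed {G₁ G₂ : Type*} [Group G₁] [Group G₂] [Finite G₁] [Finite G₂]
    {p q : ℕ} (hp : p.Prime) (hq : q.Prime) (hpq : p ≠ q) :
    (∃ H : Subgroup (G₁ × G₂), IsSchmidtPQ p q H) ↔
      (∃ H : Subgroup G₁, IsSchmidtPQ p q H) ∨ (∃ H : Subgroup G₂, IsSchmidtPQ p q H) := by
  haveI : Fact p.Prime := ⟨hp⟩
  constructor
  · rintro ⟨H, hH⟩
    let f₁ : H →* G₁ := (MonoidHom.fst G₁ G₂).comp H.subtype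
    let f₂ : H →* G₂ := (MonoidHom.snd G₁ G₂).comp H.subtype
    have hker : f₁.ker ⊓ f₂.ker = ⊥ := by
      rw [eq_bot_iff]
      intro x hx
      obtain ⟨hx1, hx2⟩ := Subgroup.mem_inf.mp hx
      rw [MonoidHom.mem_ker] at hx1 hx2
      exact Subgroup.mem_bot.mpr (Subtype.ext (Prod.ext hx1 hx2))
    by_cases h1 : Group.IsNilpotent (H ⧸ f₁.ker)
    · by_cases h2 : Group.IsNilpotent (H ⧸ f₂.ker)
      · exfalso
        obtain ⟨⟨hnn, _⟩, _, _⟩ := hH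
        apply hnn
        haveI := h1; haveI := h2
        let φ := (QuotientGroup.mk' f₁.ker).prod (QuotientGroup.mk' f₂.ker)
        have hinj : Function.Injective φ := by
          rw [← MonoidHom.ker_eq_bot_iff, MonoidHom.ker_prod]
          simpa [φ, QuotientGroup.ker_mk'] using hker
        exact (Group.isNilpotent_congr (MonoidHom.ofInjective hinj)).mpr inferInstance
      · right
        have hS := isSchmidtPQ_quotient hp hq hH f₂.ker h2
        exact ⟨f₂.range,
          isSchmidtPQ_of_mulEquiv hp (QuotientGroup.quotientKerEquivRange f₂) hS⟩
    · left
      have hS := isSchmidtPQ_quotient hp hq hH f₁.ker h1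
      exact ⟨f₁.range,
        isSchmidtPQ_of_mulEquiv hp (QuotientGroup.quotientKerEquivRange f₁) hS⟩
  · have hinl : Function.Injective (MonoidHom.inl G₁ G₂) := fun a b h => by
      simpa using congrArg Prod.fst h
    have hinr : Function.Injective (MonoidHom.inr G₁ G₂) := fun a b h => by
      simpa using congrArg Prod.snd h
    rintro (⟨H, hH⟩ | ⟨H, hH⟩)
    · exact ⟨H.map (MonoidHom.inl G₁ G₂),
        isSchmidtPQ_of_mulEquiv hp (H.equivMapOfInjective _ hinl) hH⟩
    · exact ⟨H.map (MonoidHom.inr G₁ G₂),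
        isSchmidtPQ_of_mulEquiv hp (H.equivMapOfInjective _ hinr) hH⟩
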